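/- Let (b_k)_{k≥0} be a sequence of complex numbers with b_0 = 0 and suppose there exist complex numbers (β_j)_{j≥2} with b_k·b_{j-k} = k(j-k)·β_j for all j ≥ 2 and 0 ≤ k ≤ j, and b_0·b_1 = 0. If b_j ≠ 0 for all j ≥ 1, then there exist λ, α ∈ ℂ with b_ℓ = λ·ℓ·α^ℓ for all ℓ ≥ 1. -/
import Mathlib


/-- If `b 0 = 0`, `b j ≠ 0` for all `j ≥ 1`, and there are `β j` with
`b k * b (j-k) = k (j-k) β j` for all `j ≥ 2` and `0 ≤ k ≤ j` (and `b 0 * b 1 = 0`),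
then `b ℓ = λ ℓ α^ℓ` for all `ℓ ≥ 1`, for some `λ, α ∈ ℂ`. -/
theorem stmt17 (b : ℕ → ℂ) (hb0 : b 0 = 0) (β : ℕ → ℂ)
    (hβ : ∀ j : ℕ, 2 ≤ j → ∀ k : ℕ, k ≤ j →
      b k * b (j - k) = (k : ℂ) * (((j - k : ℕ) : ℕ) : ℂ) * β j)
    (h01 : b 0 * b 1 = 0)
    (hbnz : ∀ j : ℕ, 1 ≤ j → b j ≠ 0) :
    ∃ lam α : ℂ, ∀ ℓ : ℕ, 1 ≤ ℓ → b ℓ = lam * (ℓ : ℂ) * α ^ ℓ := by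
  have h1 : b 1 ≠ 0 := hbnz 1 le_rfl
  have h2 : b 2 ≠ 0 := hbnz 2 (by norm_num)
  have key : ∀ n : ℕ, 1 ≤ n →
      2 * (n : ℂ) * b 1 * b (n + 1) = ((n : ℂ) + 1) * b 2 * b n := by
    intro n hn
    have e1 := hβ (n + 2) (by omega) 1 (by omega)
    have e2 := hβ (n + 2) (by omega) 2 (by omega)
    simp only [show n + 2 - 1 = n + 1 from rfl, show n + 2 - 2 = n from rfl] at e1 e2
    push_cast at e1 e2
    linear_combination (2 * (n : ℂ)) * e1 - ((n : ℂ) + 1) * e2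
  have H : ∀ ℓ : ℕ, 1 ≤ ℓ →
      b ℓ * ((2 * b 1) ^ ℓ * b 2) = 2 * b 1 ^ 2 * (ℓ : ℂ) * b 2 ^ ℓ := by
    intro ℓ hℓ
    induction ℓ, hℓ using Nat.le_induction with
    | base => push_cast; ring
    | succ n hn ih =>
      have hn0 : (n : ℂ) ≠ 0 := Nat.cast_ne_zero.mpr (by omega)
      have hk := key n hn
      apply mul_left_cancel₀ hn0
      push_cast
      linear_combination ((2 * b 1) ^ n * b 2) * hk + ((n : ℂ) + 1) * b 2 * ih
  refine ⟨2 * b 1 ^ 2 / b 2, b 2 / (2 * b 1), ?_⟩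
  intro ℓ hℓ
  have hH := H ℓ hℓ
  have h2b1 : (2 : ℂ) * b 1 ≠ 0 := by
    simp [h1]
  rw [div_pow]
  field_simp
  linear_combination hH
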